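/- Let n be odd, k a field of characteristic 2, G = D_{2n} the dihedral group of order 2n, and τ = Σ_{i=0}^{n-1} aⁱ ∈ kG where a is the rotation of order n. Then (τb)² = τ in kG, and τ ≡ 1 modulo the ideal Tr_1^G(kG) of Z(kG). -/

import Mathlib

open DihedralGroup MonoidAlgebra

private def dihedralEquiv (n : ℕ) : (ZMod n) ⊕ (ZMod n) ≃ DihedralGroup n where
  toFun i := match i with | Sum.inl j => DihedralGroup.r j | Sum.inr j => DihedralGroup.sr j
  invFun i := match i with | DihedralGroup.r j => Sum.inl j | DihedralGroup.sr j => Sum.inr j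
  left_inv := by rintro (x|x) <;> rfl
  right_inv := by rintro (x|x) <;> rfl

lemma sum_dihedral {n : ℕ} [NeZero n] {M : Type*} [AddCommMonoid M]
    (F : DihedralGroup n → M) :
    ∑ g : DihedralGroup n, F g = (∑ i : ZMod n, F (r i)) + ∑ i : ZMod n, F (sr i) := by
  rw [← Fintype.sum_equiv (dihedralEquiv n) (fun x => F (dihedralEquiv n x)) F (fun _ => rfl),
    Fintype.sum_sum_type]
  rfl

lemma sum_range_zmod {n : ℕ} [NeZero n] {M : Type*} [AddCommMonoid M] (f : ZMod n → M) :
    ∑ i ∈ Finset.range n, f (i : ZMod n) = ∑ i : ZMod n, f i := by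
  refine Finset.sum_nbij' (fun i => (i : ZMod n)) (fun z => z.val) ?_ ?_ ?_ ?_ ?_
  · intros; exact Finset.mem_univ _
  · intro z _; exact Finset.mem_range.mpr z.val_lt
  · intro a ha; exact ZMod.val_cast_of_lt (Finset.mem_range.mp ha)
  · intro z _; simp [ZMod.natCast_val]
  · intro a _; rfl

lemma inv_r {n : ℕ} (i : ZMod n) : (r i : DihedralGroup n)⁻¹ = r (-i) := rfl
lemma inv_sr {n : ℕ} (i : ZMod n) : (sr i : DihedralGroup n)⁻¹ = sr i := rfl

/-- Let `n` be odd, `k` a field of characteristic 2,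
`G = D_{2n}` the dihedral group of order `2n`, and `τ = ∑_{i=0}^{n-1} aⁱ` in
`kG`, where `a = r 1` is the rotation of order `n`.  Then `(τ·b)² = τ` in
`kG` (with `b = sr 0`), and `τ ≡ 1` modulo the ideal `Tr₁^G(kG)` of `Z(kG)`,
i.e. `τ - 1` lies in the image of the transfer `x ↦ ∑_{g ∈ G} g x g⁻¹`. -/
theorem stmt14 (n : ℕ) (hn : Odd n) [NeZero n] (k : Type*) [Field k] [CharP k 2]
    (τ : MonoidAlgebra k (DihedralGroup n))
    (hτ : τ = ∑ i ∈ Finset.range n, single (r (i : ZMod n)) (1 : k)) :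
    (τ * single (sr 0) (1 : k)) * (τ * single (sr 0) (1 : k)) = τ ∧
    ∃ x : MonoidAlgebra k (DihedralGroup n),
      τ - 1 = ∑ g : DihedralGroup n, single g (1 : k) * x * single g⁻¹ (1 : k) := by
  have h2 : (2 : k) = 0 := by
    have := CharP.cast_eq_zero k 2; exact_mod_cast this
  have hn1 : (n : k) = 1 := by
    obtain ⟨m, hm⟩ := hn
    rw [hm]; push_cast; rw [h2]; ring
  have hτ' : τ = ∑ i : ZMod n, single (r i) (1 : k) := by
    rw [hτ, sum_range_zmod (fun i : ZMod n => single (r i) (1 : k))]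
  -- part 1
  have hσ : τ * single (sr 0) (1 : k) = ∑ i : ZMod n, single (sr i) (1 : k) := by
    rw [hτ', Finset.sum_mul]
    simp only [single_mul_single, r_mul_sr, mul_one, zero_sub]
    exact Fintype.sum_equiv (Equiv.neg (ZMod n)) _ _ (fun i => rfl)
  have part1 : (τ * single (sr 0) (1 : k)) * (τ * single (sr 0) (1 : k)) = τ := by
    rw [hσ, Finset.sum_mul_sum]
    simp only [single_mul_single, sr_mul_sr, one_mul]
    have inner : ∀ i : ZMod n, ∑ j : ZMod n, single (r (j - i)) (1 : k) = τ := by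
      intro i
      rw [hτ']
      exact Fintype.sum_equiv (Equiv.subRight i) _ _ (fun j => rfl)
    calc ∑ i : ZMod n, ∑ j : ZMod n, single (r (j - i)) (1 : k)
        = ∑ _i : ZMod n, τ := Finset.sum_congr rfl (fun i _ => inner i)
      _ = n • τ := by rw [Finset.sum_const, Finset.card_univ, ZMod.card]
      _ = τ := by rw [← Nat.cast_smul_eq_nsmul k, hn1, one_smul]
  refine ⟨part1, ?_⟩
  -- part 2
  set x : MonoidAlgebra k (DihedralGroup n) :=
    ∑ i : ZMod n, single (r i) ((i.val : k)) with hx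
  refine ⟨x, ?_⟩
  have expand : ∀ g : DihedralGroup n,
      single g (1 : k) * x * single g⁻¹ (1 : k)
        = ∑ i : ZMod n, single (g * r i * g⁻¹) ((i.val : k)) := by
    intro g
    rw [hx, Finset.mul_sum, Finset.sum_mul]
    simp only [single_mul_single, one_mul, mul_one]
  rw [Finset.sum_congr rfl (fun g _ => expand g), sum_dihedral
    (fun g => ∑ i : ZMod n, single (g * r i * g⁻¹) ((i.val : k)))]
  have conj_r : ∀ h i : ZMod n, (r h : DihedralGroup n) * r i * (r h)⁻¹ = r i := by
    intro h i; rw [_root_.inv_r]; simp only [r_mul_r]; ring_nf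
  have conj_sr : ∀ h i : ZMod n, (sr h : DihedralGroup n) * r i * (sr h)⁻¹ = r (-i) := by
    intro h i; rw [_root_.inv_sr]; simp only [sr_mul_r, sr_mul_sr]; ring_nf
  have e1 : ∑ h : ZMod n, ∑ i : ZMod n, single ((r h : DihedralGroup n) * r i * (r h)⁻¹) ((i.val : k))
      = x := by
    simp only [conj_r]
    rw [Finset.sum_const, Finset.card_univ, ZMod.card, ← hx,
      ← Nat.cast_smul_eq_nsmul k, hn1, one_smul]
  have e2 : ∑ h : ZMod n, ∑ i : ZMod n, single ((sr h : DihedralGroup n) * r i * (sr h)⁻¹) ((i.val : k))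
      = ∑ i : ZMod n, single (r i) (((-i).val : k)) := by
    simp only [conj_sr]
    rw [Finset.sum_const, Finset.card_univ, ZMod.card,
      ← Nat.cast_smul_eq_nsmul k, hn1, one_smul]
    exact Fintype.sum_equiv (Equiv.neg (ZMod n)) _ _ (fun i => by simp)
  rw [e1, e2, hx, ← Finset.sum_add_distrib]
  have key : ∀ i : ZMod n, single (r i) ((i.val : k)) + single (r i) (((-i).val : k))
      = single (r i) (if i = 0 then (0:k) else 1) := by
    intro i
    rw [← MonoidAlgebra.single_add]
    congr 1
    by_cases hi : i = 0
    · simp [hi]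
    · rw [if_neg hi]
      have : NeZero i := ⟨hi⟩
      rw [ZMod.val_neg_of_ne_zero]
      rw [← Nat.cast_add, Nat.add_sub_cancel' (le_of_lt i.val_lt), hn1]
  rw [Finset.sum_congr rfl (fun i _ => key i), hτ', MonoidAlgebra.one_def]
  have h1 : (1 : DihedralGroup n) = r 0 := rfl
  rw [h1, eq_comm, eq_sub_iff_add_eq]
  have h0 : ∑ i : ZMod n, single (r i) (if i = 0 then (1:k) else 0)
      = single (r (0 : ZMod n)) (1 : k) := by
    rw [Finset.sum_eq_single 0]
    · simp
    · intro b _ hb; simp [hb]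
    · simp
  rw [← h0, ← Finset.sum_add_distrib]
  refine Finset.sum_congr rfl (fun i _ => ?_)
  rw [← MonoidAlgebra.single_add]
  congr 1
  split_ifs <;> ring
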